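/- Let ε' > 0, β ≥ 1, m ≥ 1 and δ ∈ (0,1). Suppose a sequence of values D(0) = mδ and D(i) ≤ (1 + ε'z^(i)/β)·D(i−1) with z^(i) ∈ [0,1] satisfies D(t) ≥ 1 at the first index t. Then, with Z = Σ_{j≤t−1} z^(j): β/Z ≤ ε' / ln(1/((1+ε')mδ)). Equivalently, Z ≥ (β/ε')·ln(1/((1+ε')mδ)). -/

import Mathlib

open Finset

/-- **Dual-growth bound (Garg–Könemann style).** With `D(0) = mδ`,
`D(i) ≤ (1 + ε'z⁽ⁱ⁾/β)·D(i−1)`, `z⁽ⁱ⁾ ∈ [0,1]`, `β ≥ 1`, `(1+ε')mδ < 1`, and `t` the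
first index with `D(t) ≥ 1`, the total `Z = Σ_{j ≤ t−1} z⁽ʲ⁾` satisfies
`β/Z ≤ ε'/ln(1/((1+ε')mδ))`, equivalently `Z ≥ (β/ε')·ln(1/((1+ε')mδ))`. -/
theorem dual_growth_bound (ε' β m δ : ℝ) (t : ℕ) (z D : ℕ → ℝ)
    (hε : 0 < ε') (hβ : 1 ≤ β) (hm : 1 ≤ m) (hδ0 : 0 < δ) (hδ1 : δ < 1)
    (hmδ : (1 + ε') * m * δ < 1)
    (hz : ∀ i, 0 ≤ z i ∧ z i ≤ 1)
    (hD0 : D 0 = m * δ)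
    (hrec : ∀ i : ℕ, 1 ≤ i → D i ≤ (1 + ε' * z i / β) * D (i - 1))
    (ht : 1 ≤ D t) (hfirst : ∀ i < t, D i < 1) :
    β / (∑ j ∈ Finset.Icc 1 (t - 1), z j)
        ≤ ε' / Real.log (1 / ((1 + ε') * m * δ)) ∧
    (β / ε') * Real.log (1 / ((1 + ε') * m * δ)) ≤ ∑ j ∈ Finset.Icc 1 (t - 1), z j := by
  have hβ0 : (0 : ℝ) < β := lt_of_lt_of_le one_pos hβ
  have hfacpos : ∀ i, (0 : ℝ) < 1 + ε' * z i / β := by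
    intro i
    have := (hz i).1
    positivity
  have hfacle : ∀ i, 1 + ε' * z i / β ≤ 1 + ε' := by
    intro i
    have h1 : ε' * z i / β ≤ ε' := by
      have h2 : ε' * z i ≤ ε' * 1 := by
        exact mul_le_mul_of_nonneg_left (hz i).2 hε.le
      calc ε' * z i / β ≤ ε' * z i / 1 := by
            apply div_le_div_of_nonneg_left _ one_pos hβ <;> nlinarith [(hz i).1]
        _ = ε' * z i := by ring
        _ ≤ ε' := by linarith
    linarith
  -- product bound
  have key : ∀ n, D n ≤ D 0 * ∏ i ∈ Finset.Icc 1 n, (1 + ε' * z i / β) := by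
    intro n
    induction n with
    | zero => simp
    | succ k ih =>
      have h1 : D (k + 1) ≤ (1 + ε' * z (k + 1) / β) * D k := by
        simpa using hrec (k + 1) (Nat.le_add_left 1 k)
      have h2 : (1 + ε' * z (k + 1) / β) * D k
          ≤ (1 + ε' * z (k + 1) / β) * (D 0 * ∏ i ∈ Finset.Icc 1 k, (1 + ε' * z i / β)) :=
        mul_le_mul_of_nonneg_left ih (hfacpos _).le
      rw [Finset.prod_Icc_succ_top (Nat.le_add_left 1 k)]
      calc D (k + 1) ≤ _ := h1.trans h2
        _ = D 0 * ((∏ i ∈ Finset.Icc 1 k, (1 + ε' * z i / β)) * (1 + ε' * z (k+1) / β)) := by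
            ring
  have ht0 : 1 ≤ t := by
    by_contra h
    push_neg at h
    interval_cases t
    rw [hD0] at ht
    nlinarith
  -- D (t-1) > 0
  have hrect : D t ≤ (1 + ε' * z t / β) * D (t - 1) := hrec t ht0
  have hDt1pos : 0 < D (t - 1) := by
    by_contra h
    push_neg at h
    nlinarith [hfacpos t, mul_nonpos_of_nonneg_of_nonpos (hfacpos t).le h]
  -- 1 ≤ (1+ε') mδ exp(ε' Z / β)
  set Z := ∑ j ∈ Finset.Icc 1 (t - 1), z j with hZ
  have hZnn : 0 ≤ Z := Finset.sum_nonneg fun i _ => (hz i).1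
  have hprodexp : (∏ i ∈ Finset.Icc 1 (t-1), (1 + ε' * z i / β)) ≤ Real.exp (ε' * Z / β) := by
    have : (∏ i ∈ Finset.Icc 1 (t-1), (1 + ε' * z i / β))
        ≤ ∏ i ∈ Finset.Icc 1 (t-1), Real.exp (ε' * z i / β) := by
      apply Finset.prod_le_prod (fun i _ => (hfacpos i).le)
      intro i _
      have := Real.add_one_le_exp (ε' * z i / β)
      linarith
    rw [← Real.exp_sum] at this
    have hsum : (∑ i ∈ Finset.Icc 1 (t-1), ε' * z i / β) = ε' * Z / β := by
      rw [hZ, Finset.mul_sum, Finset.sum_div]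
    rwa [hsum] at this
  have hchain : 1 ≤ (1 + ε') * (m * δ) * Real.exp (ε' * Z / β) := by
    have h1 : D (t - 1) ≤ m * δ * Real.exp (ε' * Z / β) := by
      have := key (t - 1)
      rw [hD0] at this
      calc D (t - 1) ≤ m * δ * ∏ i ∈ Finset.Icc 1 (t-1), (1 + ε' * z i / β) := this
        _ ≤ m * δ * Real.exp (ε' * Z / β) := by
            apply mul_le_mul_of_nonneg_left hprodexp
            positivity
    have h2 : D t ≤ (1 + ε') * D (t - 1) :=
      hrect.trans (mul_le_mul_of_nonneg_right (hfacle t) hDt1pos.le)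
    nlinarith
  set A := (1 + ε') * m * δ with hA
  have hApos : 0 < A := by positivity
  have hL : Real.log (1 / A) = -Real.log A := by
    rw [one_div, Real.log_inv]
  have hLpos : 0 < Real.log (1 / A) := by
    rw [hL]
    have := Real.log_neg hApos hmδ
    linarith
  -- take logs
  have hlog : Real.log (1 / A) ≤ ε' * Z / β := by
    have hA1 : A * Real.exp (ε' * Z / β) = (1 + ε') * (m * δ) * Real.exp (ε' * Z / β) := by
      rw [hA]; ring
    have h1 : 1 ≤ A * Real.exp (ε' * Z / β) := by rw [hA1]; exact hchain
    have h2 : Real.log 1 ≤ Real.log (A * Real.exp (ε' * Z / β)) :=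
      Real.log_le_log (by norm_num) h1
    rw [Real.log_one, Real.log_mul (ne_of_gt hApos) (Real.exp_ne_zero _),
      Real.log_exp] at h2
    rw [hL]
    linarith
  have hmain : (β / ε') * Real.log (1 / A) ≤ Z := by
    rw [div_mul_eq_mul_div, div_le_iff₀ hε]
    calc β * Real.log (1 / A) ≤ β * (ε' * Z / β) :=
          mul_le_mul_of_nonneg_left hlog hβ0.le
      _ = Z * ε' := by field_simp
  refine ⟨?_, hmain⟩
  have hZpos : 0 < Z := lt_of_lt_of_le (by positivity) hmain
  rw [div_le_div_iff₀ hZpos hLpos]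
  have h := mul_le_mul_of_nonneg_left hlog hβ0.le
  have heq : β * (ε' * Z / β) = ε' * Z := by field_simp
  linarith
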